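/- Let I_n = I_n(a_1,...,a_n) be a cylinder set of order n of the continued fraction expansion and M a positive integer. Let J = ∪_{a_{n+1} ≥ M} I_{n+1}(a_1,...,a_n,a_{n+1}). Then (1/M)·L(I_n) ≤ L(J) ≤ (2/M)·L(I_n), where L is Lebesgue measure. -/

import Mathlib

open Filter MeasureTheory Set

/-- The Gauss map `T(x) = {1/x}` (with `T(0) = 0`). -/
noncomputable def gaussMap (x : ℝ) : ℝ := Int.fract x⁻¹

/-- `cfA x n` is the `n`-th partial quotient `aₙ(x)` of the continued fraction
expansion of `x` (for `n ≥ 1`): `aₙ(x) = ⌊1 / T^{n-1}(x)⌋`. -/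
noncomputable def cfA (x : ℝ) (n : ℕ) : ℕ := ⌊(gaussMap^[n - 1] x)⁻¹⌋₊

/-- Continued fraction numerators, shifted by one: `contP d (n+1) = pₙ(d₁,…,dₙ)`,
with `p₋₁ = 1`, `p₀ = 0`, `p_{j+1} = d_{j+1} p_j + p_{j-1}`. -/
def contP (d : ℕ → ℕ) : ℕ → ℕ
  | 0 => 1
  | 1 => 0
  | n + 2 => d (n + 1) * contP d (n + 1) + contP d n

/-- Continued fraction denominators, shifted by one: `contQ d (n+1) = qₙ(d₁,…,dₙ)`,
with `q₋₁ = 0`, `q₀ = 1`, `q_{j+1} = d_{j+1} q_j + q_{j-1}`. -/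
def contQ (d : ℕ → ℕ) : ℕ → ℕ
  | 0 => 0
  | 1 => 1
  | n + 2 => d (n + 1) * contQ d (n + 1) + contQ d n

/-- The `n`-th cylinder `Iₙ(d₁,…,dₙ) = {x ∈ [0,1) : aᵢ(x) = dᵢ, 1 ≤ i ≤ n}`. -/
noncomputable def cyl (n : ℕ) (d : ℕ → ℕ) : Set ℝ :=
  {x | x ∈ Set.Ico (0 : ℝ) 1 ∧ ∀ i, 1 ≤ i → i ≤ n → cfA x i = d i}

-- aux lemmas
lemma contQ_pos (d : ℕ → ℕ) (hd : ∀ i, 1 ≤ d i) : ∀ n, 1 ≤ contQ d (n + 1) := by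
  intro n
  induction n with
  | zero => simp [contQ]
  | succ k ih =>
    show 1 ≤ d (k + 1) * contQ d (k + 1) + contQ d k
    have := hd (k + 1)
    nlinarith

lemma contQ_mono (d : ℕ → ℕ) (hd : ∀ i, 1 ≤ d i) : ∀ n, contQ d n ≤ contQ d (n + 1)
  | 0 => by simp [contQ]
  | (k + 1) => by
      show contQ d (k + 1) ≤ d (k + 1) * contQ d (k + 1) + contQ d k
      have := hd (k + 1)
      nlinarith

lemma contDet (d : ℕ → ℕ) : ∀ n, (contP d n : ℤ) * contQ d (n + 1) - contP d (n + 1) * contQ d n = (-1) ^ n := by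
  intro n
  induction n with
  | zero => simp [contP, contQ]
  | succ k ih =>
    have e1 : contP d (k + 2) = d (k + 1) * contP d (k + 1) + contP d k := by simp [contP]
    have e2 : contQ d (k + 2) = d (k + 1) * contQ d (k + 1) + contQ d k := by simp [contQ]
    rw [e1, e2, pow_succ]
    push_cast
    linear_combination (-1 : ℤ) * ih

noncomputable def cylMap (d : ℕ → ℕ) (n : ℕ) (t : ℝ) : ℝ :=
  ((contP d (n + 1) : ℝ) + t * (contP d n : ℝ)) / ((contQ d (n + 1) : ℝ) + t * (contQ d n : ℝ))

lemma denom_pos (d : ℕ → ℕ) (hd : ∀ i, 1 ≤ d i) (n : ℕ) (t : ℝ) (ht : 0 ≤ t) :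
    0 < (contQ d (n + 1) : ℝ) + t * (contQ d n : ℝ) := by
  have h1 : (1 : ℝ) ≤ (contQ d (n + 1) : ℝ) := by exact_mod_cast contQ_pos d hd n
  have h0 : (0 : ℝ) ≤ (contQ d n : ℝ) := Nat.cast_nonneg _
  nlinarith

lemma cylMap_succ (d : ℕ → ℕ) (hd : ∀ i, 1 ≤ d i) (n : ℕ) (s : ℝ) (hs : 0 ≤ s) :
    cylMap d (n + 1) s = cylMap d n (((d (n + 1) : ℝ) + s)⁻¹) := by
  have hk1 : (1 : ℝ) ≤ (d (n + 1) : ℝ) := by exact_mod_cast hd (n + 1)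
  have hks : (0 : ℝ) < (d (n + 1) : ℝ) + s := by linarith
  have ht : (0 : ℝ) ≤ ((d (n + 1) : ℝ) + s)⁻¹ := by positivity
  have h1 := denom_pos d hd n _ ht
  have hQ1 : (1 : ℝ) ≤ (contQ d (n + 1) : ℝ) := by exact_mod_cast contQ_pos d hd n
  have hQ0 : (0 : ℝ) ≤ (contQ d n : ℝ) := Nat.cast_nonneg _
  have e1 : contP d (n + 2) = d (n + 1) * contP d (n + 1) + contP d n := by simp [contP]
  have e2 : contQ d (n + 2) = d (n + 1) * contQ d (n + 1) + contQ d n := by simp [contQ]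
  unfold cylMap
  rw [show n + 1 + 1 = n + 2 from rfl, e1, e2]
  push_cast
  rw [div_eq_div_iff (by nlinarith) h1.ne']
  field_simp
  ring

lemma cyl_param (d : ℕ → ℕ) (hd : ∀ i, 1 ≤ d i) : ∀ n : ℕ,
    (∀ t ∈ Ioo (0 : ℝ) 1, cylMap d n t ∈ cyl n d ∧ gaussMap^[n] (cylMap d n t) = t) ∧
    (∀ x ∈ cyl n d, gaussMap^[n] x ∈ Ico (0 : ℝ) 1 ∧ x = cylMap d n (gaussMap^[n] x)) := by
  intro n
  induction n with
  | zero =>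
    have hmap : ∀ t : ℝ, cylMap d 0 t = t := by
      intro t; simp [cylMap, contP, contQ]
    constructor
    · intro t ht
      rw [hmap]
      exact ⟨⟨⟨ht.1.le, ht.2⟩, fun i h1 h2 => by omega⟩, rfl⟩
    · intro x hx
      exact ⟨hx.1, by rw [hmap]; rfl⟩
  | succ m ih =>
    obtain ⟨ih1, ih2⟩ := ih
    have hcylsucc : ∀ x : ℝ, x ∈ cyl (m + 1) d ↔ x ∈ cyl m d ∧ cfA x (m + 1) = d (m + 1) := by
      intro x
      constructor
      · rintro ⟨hx, h⟩
        exact ⟨⟨hx, fun i h1 h2 => h i h1 (by omega)⟩, h (m + 1) (by omega) le_rfl⟩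
      · rintro ⟨⟨hx, h⟩, hl⟩
        refine ⟨hx, fun i h1 h2 => ?_⟩
        rcases eq_or_lt_of_le h2 with h2' | h2'
        · rw [h2']; exact hl
        · exact h i h1 (by omega)
    constructor
    · intro s hs
      have hk1 : (1 : ℝ) ≤ (d (m + 1) : ℝ) := by exact_mod_cast hd (m + 1)
      have hks : (1 : ℝ) < (d (m + 1) : ℝ) + s := by linarith [hs.1]
      have hks0 : (0 : ℝ) < (d (m + 1) : ℝ) + s := by linarith
      set t : ℝ := ((d (m + 1) : ℝ) + s)⁻¹ with htdef
      have ht : t ∈ Ioo (0 : ℝ) 1 := ⟨by positivity, inv_lt_one_of_one_lt₀ hks⟩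
      have heq : cylMap d (m + 1) s = cylMap d m t := cylMap_succ d hd m s hs.1.le
      obtain ⟨hmem, hiter⟩ := ih1 t ht
      have htinv : t⁻¹ = (d (m + 1) : ℝ) + s := by rw [htdef, inv_inv]
      constructor
      · rw [heq, hcylsucc]
        refine ⟨hmem, ?_⟩
        unfold cfA
        simp only [Nat.add_sub_cancel]
        rw [hiter, htinv, add_comm]
        rw [Nat.floor_add_natCast hs.1.le]
        rw [Nat.floor_eq_zero.mpr hs.2]
        simp
      · rw [heq, Function.iterate_succ_apply', hiter]
        unfold gaussMap
        rw [htinv, add_comm, Int.fract_add_natCast]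
        exact Int.fract_eq_self.mpr ⟨hs.1.le, hs.2⟩
    · intro x hx
      rw [hcylsucc] at hx
      obtain ⟨hxm, hcf⟩ := hx
      obtain ⟨htmem, hxeq⟩ := ih2 x hxm
      set t := gaussMap^[m] x with htdef
      have hk1 : 1 ≤ d (m + 1) := hd (m + 1)
      have hfl : ⌊t⁻¹⌋₊ = d (m + 1) := by
        unfold cfA at hcf
        simpa using hcf
      have ht0 : 0 < t := by
        rcases eq_or_lt_of_le htmem.1 with h | h
        · exfalso; rw [← h] at hfl; norm_num at hfl; omega
        · exact h
      have hinv0 : (0 : ℝ) ≤ t⁻¹ := by positivity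
      have hbounds : ((d (m + 1) : ℝ)) ≤ t⁻¹ ∧ t⁻¹ < d (m + 1) + 1 :=
        (Nat.floor_eq_iff hinv0).mp hfl
      have hzfl : ⌊t⁻¹⌋ = (d (m + 1) : ℤ) := by
        rw [Int.floor_eq_iff]
        constructor
        · exact_mod_cast hbounds.1
        · push_cast; exact hbounds.2
      have hs_eq : gaussMap^[m + 1] x = t⁻¹ - (d (m + 1) : ℝ) := by
        rw [Function.iterate_succ_apply', ← htdef]
        unfold gaussMap
        rw [Int.fract, hzfl]
        push_cast; ring
      have hs_mem : gaussMap^[m + 1] x ∈ Ico (0 : ℝ) 1 := by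
        rw [Function.iterate_succ_apply', ← htdef]
        exact ⟨Int.fract_nonneg _, Int.fract_lt_one _⟩
      refine ⟨hs_mem, ?_⟩
      have hts : ((d (m + 1) : ℝ) + gaussMap^[m + 1] x) = t⁻¹ := by
        rw [hs_eq]; ring
      rw [cylMap_succ d hd m _ hs_mem.1, hts, inv_inv]
      exact hxeq

lemma image_volume (d : ℕ → ℕ) (hd : ∀ i, 1 ≤ d i) (n : ℕ) (a b : ℝ) (ha : 0 ≤ a)
    (hab : a ≤ b) (K : Set ℝ)
    (h1 : cylMap d n '' Ioo a b ⊆ K) (h2 : K ⊆ cylMap d n '' Icc a b) :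
    volume K = ENNReal.ofReal ((b - a) /
      (((contQ d (n + 1) : ℝ) + a * (contQ d n : ℝ)) * ((contQ d (n + 1) : ℝ) + b * (contQ d n : ℝ)))) := by
  set f := cylMap d n with hf
  have hb : 0 ≤ b := ha.trans hab
  have hda := denom_pos d hd n a ha
  have hdb := denom_pos d hd n b hb
  have hdet : (contP d n : ℝ) * (contQ d (n + 1) : ℝ) - (contP d (n + 1) : ℝ) * (contQ d n : ℝ) = (-1) ^ n := by
    exact_mod_cast contDet d n
  have hdiff : ∀ s u : ℝ, 0 ≤ s → 0 ≤ u →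
      f u - f s = (u - s) * (-1) ^ n /
        (((contQ d (n + 1) : ℝ) + s * (contQ d n : ℝ)) * ((contQ d (n + 1) : ℝ) + u * (contQ d n : ℝ))) := by
    intro s u hs hu
    have hds := denom_pos d hd n s hs
    have hdu := denom_pos d hd n u hu
    rw [hf]
    unfold cylMap
    rw [div_sub_div _ _ hdu.ne' hds.ne']
    rw [div_eq_div_iff (by positivity) (by positivity)]
    linear_combination ((u - s) * (((contQ d (n + 1) : ℝ) + s * (contQ d n : ℝ)) * ((contQ d (n + 1) : ℝ) + u * (contQ d n : ℝ)))) * hdet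
  have hcont : ContinuousOn f (Icc a b) := by
    apply ContinuousOn.div
    · exact (continuous_const.add (continuous_id.mul continuous_const)).continuousOn
    · exact (continuous_const.add (continuous_id.mul continuous_const)).continuousOn
    · intro x hx
      exact (denom_pos d hd n x (ha.trans hx.1)).ne'
  obtain ⟨c₁, c₂, hsub, hsup, hlen⟩ :
      ∃ c₁ c₂ : ℝ, Ioo c₁ c₂ ⊆ K ∧ K ⊆ Icc c₁ c₂ ∧
        c₂ - c₁ = (b - a) /
          (((contQ d (n + 1) : ℝ) + a * (contQ d n : ℝ)) * ((contQ d (n + 1) : ℝ) + b * (contQ d n : ℝ))) := by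
    rcases Nat.even_or_odd n with hpar | hpar
    · have hsign : ((-1 : ℝ)) ^ n = 1 := hpar.neg_one_pow
      refine ⟨f a, f b, (intermediate_value_Ioo hab hcont).trans h1, ?_, ?_⟩
      · intro x hx
        obtain ⟨u, hu, rfl⟩ := h2 hx
        have hu0 : 0 ≤ u := ha.trans hu.1
        have hA := hdiff a u ha hu0
        have hB := hdiff u b hu0 hb
        rw [hsign, mul_one] at hA hB
        have hdu := denom_pos d hd n u hu0
        constructor
        · have : 0 ≤ (u - a) / (((contQ d (n + 1) : ℝ) + a * (contQ d n : ℝ)) * ((contQ d (n + 1) : ℝ) + u * (contQ d n : ℝ))) :=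
            div_nonneg (by linarith [hu.1]) (by positivity)
          linarith
        · have : 0 ≤ (b - u) / (((contQ d (n + 1) : ℝ) + u * (contQ d n : ℝ)) * ((contQ d (n + 1) : ℝ) + b * (contQ d n : ℝ))) :=
            div_nonneg (by linarith [hu.2]) (by positivity)
          linarith
      · have hA := hdiff a b ha hb
        rw [hsign, mul_one] at hA
        linarith
    · have hsign : ((-1 : ℝ)) ^ n = -1 := hpar.neg_one_pow
      refine ⟨f b, f a, (intermediate_value_Ioo' hab hcont).trans h1, ?_, ?_⟩
      · intro x hx
        obtain ⟨u, hu, rfl⟩ := h2 hx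
        have hu0 : 0 ≤ u := ha.trans hu.1
        have hA := hdiff a u ha hu0
        have hB := hdiff u b hu0 hb
        rw [hsign] at hA hB
        have hdu := denom_pos d hd n u hu0
        constructor
        · have : 0 ≤ (b - u) / (((contQ d (n + 1) : ℝ) + u * (contQ d n : ℝ)) * ((contQ d (n + 1) : ℝ) + b * (contQ d n : ℝ))) :=
            div_nonneg (by linarith [hu.2]) (by positivity)
          have e : f b - f u = -((b - u) / (((contQ d (n + 1) : ℝ) + u * (contQ d n : ℝ)) * ((contQ d (n + 1) : ℝ) + b * (contQ d n : ℝ)))) := by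
            rw [hB]; ring
          linarith
        · have : 0 ≤ (u - a) / (((contQ d (n + 1) : ℝ) + a * (contQ d n : ℝ)) * ((contQ d (n + 1) : ℝ) + u * (contQ d n : ℝ))) :=
            div_nonneg (by linarith [hu.1]) (by positivity)
          have e : f u - f a = -((u - a) / (((contQ d (n + 1) : ℝ) + a * (contQ d n : ℝ)) * ((contQ d (n + 1) : ℝ) + u * (contQ d n : ℝ)))) := by
            rw [hA]; ring
          linarith
      · have hA := hdiff a b ha hb
        rw [hsign] at hA
        have : f a - f b = (b - a) / (((contQ d (n + 1) : ℝ) + a * (contQ d n : ℝ)) * ((contQ d (n + 1) : ℝ) + b * (contQ d n : ℝ))) := by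
          rw [show f a - f b = -(f b - f a) by ring, hA]; ring
        linarith
  refine le_antisymm ?_ ?_
  · calc volume K ≤ volume (Icc c₁ c₂) := measure_mono hsup
      _ = ENNReal.ofReal (c₂ - c₁) := Real.volume_Icc
      _ = _ := by rw [hlen]
  · calc ENNReal.ofReal ((b - a) /
          (((contQ d (n + 1) : ℝ) + a * (contQ d n : ℝ)) * ((contQ d (n + 1) : ℝ) + b * (contQ d n : ℝ))))
        = ENNReal.ofReal (c₂ - c₁) := by rw [hlen]
      _ = volume (Ioo c₁ c₂) := Real.volume_Ioo.symm
      _ ≤ volume K := measure_mono hsub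

/-- `J = ⋃_{a_{n+1} ≥ M} I_{n+1}(a₁,…,aₙ,a_{n+1})` satisfies
`(1/M)·L(Iₙ) ≤ L(J) ≤ (2/M)·L(Iₙ)`. -/
theorem cylinder_tail_measure (n M : ℕ) (hM : 1 ≤ M) (d : ℕ → ℕ)
    (hd : ∀ i, 1 ≤ d i) :
    1 / (M : ℝ) * (volume (cyl n d)).toReal
        ≤ (volume {x | x ∈ cyl n d ∧ M ≤ cfA x (n + 1)}).toReal ∧
      (volume {x | x ∈ cyl n d ∧ M ≤ cfA x (n + 1)}).toReal
        ≤ 2 / (M : ℝ) * (volume (cyl n d)).toReal := by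
  have hQ1 : (1 : ℝ) ≤ (contQ d (n + 1) : ℝ) := by exact_mod_cast contQ_pos d hd n
  have hQ0 : (0 : ℝ) ≤ (contQ d n : ℝ) := Nat.cast_nonneg _
  have hQ01 : (contQ d n : ℝ) ≤ (contQ d (n + 1) : ℝ) := by exact_mod_cast contQ_mono d hd n
  have hQ1' : (0 : ℝ) ≤ (contQ d (n + 1) : ℝ) := by linarith
  have hm : (1 : ℝ) ≤ (M : ℝ) := by exact_mod_cast hM
  have hm0 : (0 : ℝ) < (M : ℝ) := by linarith
  obtain ⟨hpar1, hpar2⟩ := cyl_param d hd n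
  have hM1 : (0 : ℝ) < 1 / (M : ℝ) := by positivity
  have hM2 : (1 : ℝ) / (M : ℝ) ≤ 1 := by rw [div_le_one hm0]; exact hm
  have hC : volume (cyl n d) = ENNReal.ofReal (((1:ℝ) - 0) /
      (((contQ d (n + 1) : ℝ) + 0 * (contQ d n : ℝ)) * ((contQ d (n + 1) : ℝ) + 1 * (contQ d n : ℝ)))) := by
    apply image_volume d hd n 0 1 le_rfl zero_le_one
    · rintro x ⟨t, ht, rfl⟩
      exact (hpar1 t ht).1
    · intro x hx
      obtain ⟨ht, hxe⟩ := hpar2 x hx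
      exact ⟨_, ⟨ht.1, ht.2.le⟩, hxe.symm⟩
  have hJ : volume {x | x ∈ cyl n d ∧ M ≤ cfA x (n + 1)} = ENNReal.ofReal ((1 / (M:ℝ) - 0) /
      (((contQ d (n + 1) : ℝ) + 0 * (contQ d n : ℝ)) * ((contQ d (n + 1) : ℝ) + (1 / (M:ℝ)) * (contQ d n : ℝ)))) := by
    apply image_volume d hd n 0 (1 / (M:ℝ)) le_rfl hM1.le
    · rintro x ⟨t, ht, rfl⟩
      have ht1 : t ∈ Ioo (0 : ℝ) 1 := ⟨ht.1, lt_of_lt_of_le ht.2 hM2⟩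
      obtain ⟨hmem, hiter⟩ := hpar1 t ht1
      refine ⟨hmem, ?_⟩
      show M ≤ cfA (cylMap d n t) (n + 1)
      unfold cfA
      simp only [Nat.add_sub_cancel]
      rw [hiter]
      rw [Nat.le_floor_iff (inv_nonneg.mpr ht1.1.le)]
      have hMM : (M : ℝ) * (1 / (M : ℝ)) = 1 := by field_simp
      have h2 : (M : ℝ) * t < 1 := by nlinarith [mul_lt_mul_of_pos_left ht.2 hm0]
      nlinarith [mul_inv_cancel₀ ht1.1.ne', ht1.1]
    · rintro x ⟨hx, hMle⟩
      obtain ⟨ht, hxe⟩ := hpar2 x hx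
      set t := gaussMap^[n] x with htdef
      have hcf : M ≤ ⌊t⁻¹⌋₊ := by
        unfold cfA at hMle
        simpa using hMle
      have ht0 : 0 < t := by
        rcases eq_or_lt_of_le ht.1 with h | h
        · exfalso; rw [← h] at hcf; norm_num at hcf; omega
        · exact h
      have hMt : (M : ℝ) ≤ t⁻¹ := by
        calc (M : ℝ) ≤ (⌊t⁻¹⌋₊ : ℝ) := by exact_mod_cast hcf
          _ ≤ t⁻¹ := Nat.floor_le (by positivity)
      have htM : t ≤ 1 / (M : ℝ) := by
        rw [le_div_iff₀ hm0]
        nlinarith [mul_le_mul_of_nonneg_left hMt ht0.le, mul_inv_cancel₀ ht0.ne']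
      exact ⟨t, ⟨ht.1, htM⟩, hxe.symm⟩
  have e1 : ((1:ℝ) - 0) /
      (((contQ d (n + 1) : ℝ) + 0 * (contQ d n : ℝ)) * ((contQ d (n + 1) : ℝ) + 1 * (contQ d n : ℝ)))
      = 1 / ((contQ d (n + 1) : ℝ) * ((contQ d (n + 1) : ℝ) + (contQ d n : ℝ))) := by
    norm_num
  have e2 : ((1:ℝ) / (M:ℝ) - 0) /
      (((contQ d (n + 1) : ℝ) + 0 * (contQ d n : ℝ)) * ((contQ d (n + 1) : ℝ) + (1 / (M:ℝ)) * (contQ d n : ℝ)))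
      = 1 / ((contQ d (n + 1) : ℝ) * ((M:ℝ) * (contQ d (n + 1) : ℝ) + (contQ d n : ℝ))) := by
    have hMne : (M : ℝ) ≠ 0 := hm0.ne'
    have h1 : ((contQ d (n + 1) : ℝ)) ≠ 0 := by linarith
    field_simp
    ring

  rw [hC, hJ, e1, e2]
  rw [ENNReal.toReal_ofReal (by positivity), ENNReal.toReal_ofReal (by positivity)]
  set Q1 := (contQ d (n + 1) : ℝ)
  set Q0 := (contQ d n : ℝ)
  have hQ1pos : (0 : ℝ) < Q1 := by linarith
  have hA : (0 : ℝ) < Q1 * ((M:ℝ) * Q1 + Q0) :=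
    mul_pos hQ1pos (by nlinarith [mul_pos hm0 hQ1pos])
  have hB : (0 : ℝ) < (M:ℝ) * (Q1 * (Q1 + Q0)) :=
    mul_pos hm0 (mul_pos hQ1pos (by linarith))
  constructor
  · rw [div_mul_div_comm, one_mul, div_le_div_iff₀ hB hA]
    nlinarith [mul_nonneg (mul_nonneg (sub_nonneg.mpr hm) hQ1pos.le) hQ0]
  · rw [div_mul_div_comm, mul_one, div_le_div_iff₀ hA hB]
    nlinarith [mul_nonneg (mul_nonneg hm0.le hQ1pos.le) (sub_nonneg.mpr hQ01)]
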